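/- Let q, u, v ∈ ℂ with |q| < 1, |u| < 1 and |v| < 1. Then the doubly indexed family (q^{kl} u^{k} v^{l} / ((q;q)_k (q;q)_l))_{(k,l) ∈ ℕ×ℕ} is summable, and Σ_{k,l ≥ 0} q^{kl} u^{k} v^{l} / ((q;q)_k (q;q)_l) = (uv;q)_∞ / ((u;q)_∞ (v;q)_∞). -/

import Mathlib

open Finset

/-- The `q`-shifted factorial `(a;q)_n = ∏_{i=0}^{n-1} (1 - a q^i)` in `ℂ`. -/
noncomputable def qPoch (q a : ℂ) (n : ℕ) : ℂ :=
  ∏ i ∈ Finset.range n, (1 - a * q ^ i)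

/-- The infinite `q`-shifted factorial `(a;q)_∞ = ∏_{i=0}^{∞} (1 - a q^i)`. -/
noncomputable def qPochInf (q a : ℂ) : ℂ :=
  ∏' i : ℕ, (1 - a * q ^ i)

open Filter Complex

namespace QP

lemma qPoch_succ (q a : ℂ) (n : ℕ) :
    qPoch q a (n + 1) = qPoch q a n * (1 - a * q ^ n) :=
  Finset.prod_range_succ _ _

lemma qPoch_zero_left (q : ℂ) (n : ℕ) : qPoch q 0 n = 1 := by
  simp [qPoch]

lemma factor_ne {q a : ℂ} (hq : ‖q‖ < 1) (ha : ‖a‖ < 1) (i : ℕ) :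
    (1 : ℂ) - a * q ^ i ≠ 0 := by
  intro h
  have h1 : a * q ^ i = 1 := by linear_combination -h
  have h2 : ‖a * q ^ i‖ < 1 := by
    rw [norm_mul, norm_pow]
    calc ‖a‖ * ‖q‖ ^ i ≤ ‖a‖ * 1 := by
          have := pow_le_one₀ (norm_nonneg q) hq.le (n := i)
          nlinarith [norm_nonneg a]
      _ < 1 := by simpa using ha
  rw [h1] at h2
  simp at h2

lemma qPoch_ne {q a : ℂ} (hq : ‖q‖ < 1) (ha : ‖a‖ < 1) (n : ℕ) :
    qPoch q a n ≠ 0 := by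
  rw [qPoch, Finset.prod_ne_zero_iff]
  exact fun i _ => factor_ne hq ha i

lemma summable_log {q : ℂ} (hq : ‖q‖ < 1) (a : ℂ) :
    Summable fun i : ℕ => Complex.log (1 - a * q ^ i) := by
  have htend : Tendsto (fun i : ℕ => ‖a * q ^ i‖) atTop (nhds 0) := by
    have := (tendsto_pow_atTop_nhds_zero_of_norm_lt_one hq).const_mul a
    simpa using this.norm
  have hev : ∀ᶠ i in atTop, ‖a * q ^ i‖ ≤ 1 / 2 :=
    htend.eventually_le_const (by norm_num)
  apply Summable.of_norm_bounded_eventually_nat (g := fun i => 3 / 2 * (‖a‖ * ‖q‖ ^ i))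
  · exact ((summable_geometric_of_lt_one (norm_nonneg q) hq).mul_left ‖a‖).mul_left _
  · filter_upwards [hev] with i hi
    have : (1 : ℂ) - a * q ^ i = 1 + -(a * q ^ i) := by ring
    rw [this]
    have := Complex.norm_log_one_add_half_le_self (z := -(a * q ^ i)) (by simpa using hi)
    simpa [norm_mul, norm_pow] using this

lemma hasProd_qp {q a : ℂ} (hq : ‖q‖ < 1) (ha : ‖a‖ < 1) :
    HasProd (fun i : ℕ => 1 - a * q ^ i)
      (Complex.exp (∑' i : ℕ, Complex.log (1 - a * q ^ i))) := by
  have h := (summable_log hq a).hasSum.cexp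
  have hfe : (Complex.exp ∘ fun i : ℕ => Complex.log (1 - a * q ^ i)) =
      fun i : ℕ => 1 - a * q ^ i := by
    funext i
    exact Complex.exp_log (factor_ne hq ha i)
  rwa [hfe] at h

lemma multipliable_qp {q a : ℂ} (hq : ‖q‖ < 1) (ha : ‖a‖ < 1) :
    Multipliable fun i : ℕ => 1 - a * q ^ i :=
  (hasProd_qp hq ha).multipliable

lemma qPochInf_ne {q a : ℂ} (hq : ‖q‖ < 1) (ha : ‖a‖ < 1) :
    qPochInf q a ≠ 0 := by
  rw [qPochInf, (hasProd_qp hq ha).tprod_eq]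
  exact Complex.exp_ne_zero _

lemma tendsto_qPoch {q a : ℂ} (hq : ‖q‖ < 1) (ha : ‖a‖ < 1) :
    Tendsto (fun n => qPoch q a n) atTop (nhds (qPochInf q a)) := by
  have h := multipliable_qp hq ha
  unfold qPoch qPochInf
  exact h.hasProd.tendsto_prod_nat

lemma norm_pow_mul_lt {q a : ℂ} (hq : ‖q‖ < 1) (ha : ‖a‖ < 1) (k : ℕ) :
    ‖q ^ k * a‖ < 1 := by
  rw [norm_mul, norm_pow]
  have h1 : ‖q‖ ^ k ≤ 1 := pow_le_one₀ (norm_nonneg q) hq.le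
  nlinarith [norm_nonneg a, pow_nonneg (norm_nonneg q) k]

lemma qPochInf_tail {q a : ℂ} (hq : ‖q‖ < 1) (ha : ‖a‖ < 1) (k : ℕ) :
    qPochInf q a = qPoch q a k * qPochInf q (q ^ k * a) := by
  have hsum := summable_log hq a
  have hsplit := Summable.sum_add_tsum_nat_add (f := fun i : ℕ => Complex.log (1 - a * q ^ i)) k hsum
  have h1 : qPochInf q a = Complex.exp (∑' i : ℕ, Complex.log (1 - a * q ^ i)) :=
    (hasProd_qp hq ha).tprod_eq
  have h2 : qPochInf q (q ^ k * a)
      = Complex.exp (∑' i : ℕ, Complex.log (1 - a * q ^ (i + k))) := by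
    unfold qPochInf
    rw [(hasProd_qp hq (norm_pow_mul_lt hq ha k)).tprod_eq]
    congr 1
    apply tsum_congr
    intro i
    congr 2
    rw [pow_add]
    ring
  have h3 : qPoch q a k
      = Complex.exp (∑ i ∈ Finset.range k, Complex.log (1 - a * q ^ i)) := by
    rw [Complex.exp_sum, qPoch]
    exact Finset.prod_congr rfl fun i _ => (Complex.exp_log (factor_ne hq ha i)).symm
  rw [h1, h2, h3, ← Complex.exp_add, hsplit]
lemma exists_lb {q : ℂ} (hq : ‖q‖ < 1) :
    ∃ C : ℝ, 0 < C ∧ ∀ k, C ≤ ‖qPoch q q k‖ := by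
  have hP := qPochInf_ne hq hq
  have ht : Tendsto (fun n => ‖qPoch q q n‖) atTop (nhds ‖qPochInf q q‖) :=
    (tendsto_qPoch hq hq).norm
  have hpos : 0 < ‖qPochInf q q‖ := norm_pos_iff.mpr hP
  have hev : ∀ᶠ n in atTop, ‖qPochInf q q‖ / 2 < ‖qPoch q q n‖ :=
    ht.eventually_const_lt (half_lt_self hpos)
  obtain ⟨N, hN⟩ := eventually_atTop.mp hev
  have hne : (Finset.range (N + 1)).Nonempty := ⟨0, by simp⟩
  refine ⟨min (‖qPochInf q q‖ / 2)
      ((Finset.range (N + 1)).inf' hne fun k => ‖qPoch q q k‖), ?_, ?_⟩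
  · apply lt_min (by positivity)
    apply (Finset.lt_inf'_iff hne).mpr
    intro k _
    exact norm_pos_iff.mpr (qPoch_ne hq hq k)
  · intro k
    rcases le_or_gt k N with h | h
    · exact le_trans (min_le_right _ _)
        (Finset.inf'_le _ (Finset.mem_range.mpr (Nat.lt_succ_of_le h)))
    · exact le_trans (min_le_left _ _) (hN k h.le).le

lemma qPoch_norm_le {q : ℂ} (hq : ‖q‖ < 1) (v : ℂ) (k : ℕ) :
    ‖qPoch q v k‖ ≤ Real.exp (‖v‖ * (1 - ‖q‖)⁻¹) := by
  have h0 : ∀ i : ℕ, ‖(1 : ℂ) - v * q ^ i‖ ≤ Real.exp (‖v‖ * ‖q‖ ^ i) := by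
    intro i
    calc ‖(1 : ℂ) - v * q ^ i‖ ≤ ‖(1 : ℂ)‖ + ‖v * q ^ i‖ := norm_sub_le _ _
      _ = 1 + ‖v‖ * ‖q‖ ^ i := by rw [norm_one, norm_mul, norm_pow]
      _ ≤ Real.exp (‖v‖ * ‖q‖ ^ i) := by
          have := Real.add_one_le_exp (‖v‖ * ‖q‖ ^ i)
          linarith
  calc ‖qPoch q v k‖ = ∏ i ∈ Finset.range k, ‖(1 : ℂ) - v * q ^ i‖ := by
        rw [qPoch]; exact norm_prod _ _
    _ ≤ ∏ i ∈ Finset.range k, Real.exp (‖v‖ * ‖q‖ ^ i) :=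
        Finset.prod_le_prod (fun i _ => norm_nonneg _) (fun i _ => h0 i)
    _ = Real.exp (∑ i ∈ Finset.range k, ‖v‖ * ‖q‖ ^ i) := (Real.exp_sum _ _).symm
    _ ≤ Real.exp (‖v‖ * (1 - ‖q‖)⁻¹) := by
        apply Real.exp_le_exp.mpr
        rw [← Finset.mul_sum]
        have hg : ∑ i ∈ Finset.range k, ‖q‖ ^ i ≤ (1 - ‖q‖)⁻¹ := by
          have hs := summable_geometric_of_lt_one (norm_nonneg q) hq
          have h := Summable.sum_le_tsum (Finset.range k)
            (fun i _ => pow_nonneg (norm_nonneg q) i) hs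
          rwa [tsum_geometric_of_lt_one (norm_nonneg q) hq] at h
        nlinarith [norm_nonneg v]

lemma summable_gauss {q : ℂ} (hq : ‖q‖ < 1) (v : ℂ) {u : ℂ} (hu : ‖u‖ < 1)
    {C : ℝ} (hC0 : 0 < C) (hC : ∀ k, C ≤ ‖qPoch q q k‖) :
    Summable fun k : ℕ => qPoch q v k * u ^ k / qPoch q q k := by
  apply Summable.of_norm_bounded
    (g := fun k => Real.exp (‖v‖ * (1 - ‖q‖)⁻¹) / C * ‖u‖ ^ k)
    ((summable_geometric_of_lt_one (norm_nonneg u) hu).mul_left _)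
  intro k
  rw [norm_div, norm_mul, norm_pow]
  have h1 := qPoch_norm_le hq v k
  have h2 := hC k
  calc ‖qPoch q v k‖ * ‖u‖ ^ k / ‖qPoch q q k‖
      ≤ Real.exp (‖v‖ * (1 - ‖q‖)⁻¹) * ‖u‖ ^ k / C := by
        gcongr
    _ = Real.exp (‖v‖ * (1 - ‖q‖)⁻¹) / C * ‖u‖ ^ k := by ring
lemma gauss_fe {q v u : ℂ} (hq : ‖q‖ < 1) (hu : ‖u‖ < 1)
    {C : ℝ} (hC0 : 0 < C) (hC : ∀ k, C ≤ ‖qPoch q q k‖) :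
    (1 - u) * (∑' k : ℕ, qPoch q v k * u ^ k / qPoch q q k)
      = (1 - u * v) * (∑' k : ℕ, qPoch q v k * (q * u) ^ k / qPoch q q k) := by
  have hqu : ‖q * u‖ < 1 := by
    rw [norm_mul]; nlinarith [norm_nonneg u, norm_nonneg q]
  set t : ℕ → ℂ := fun k => qPoch q v k * u ^ k / qPoch q q k with hts
  set s : ℕ → ℂ := fun k => qPoch q v k * (q * u) ^ k / qPoch q q k with hss
  have St : Summable t := summable_gauss hq v hu hC0 hC
  have Ss : Summable s := summable_gauss hq v hqu hC0 hC
  have key : ∀ k : ℕ, t (k + 1) - s (k + 1) = u * t k - (u * v) * s k := by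
    intro k
    simp only [hts, hss, qPoch_succ]
    have h1 : qPoch q q k ≠ 0 := qPoch_ne hq hq k
    have h2 : (1 : ℂ) - q * q ^ k ≠ 0 := factor_ne hq hq k
    rw [div_sub_div_same, div_eq_iff (mul_ne_zero h1 h2)]
    field_simp
    ring
  have hsub : ∑' k, (t k - s k) = ∑' k, t k - ∑' k, s k := Summable.tsum_sub St Ss
  have h0 : t 0 - s 0 = 0 := by simp [hts, hss, qPoch]
  have hshift : ∑' k, (t k - s k) = (t 0 - s 0) + ∑' k, (t (k + 1) - s (k + 1)) :=
    Summable.tsum_eq_zero_add (St.sub Ss)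
  have hr : ∑' k, (t (k + 1) - s (k + 1)) = u * ∑' k, t k - (u * v) * ∑' k, s k := by
    calc ∑' k, (t (k + 1) - s (k + 1)) = ∑' k, (u * t k - (u * v) * s k) := tsum_congr key
      _ = ∑' k, u * t k - ∑' k, (u * v) * s k :=
          Summable.tsum_sub (St.mul_left u) (Ss.mul_left (u * v))
      _ = u * ∑' k, t k - (u * v) * ∑' k, s k := by rw [tsum_mul_left, tsum_mul_left]
  have hfin : ∑' k, t k - ∑' k, s k = u * ∑' k, t k - (u * v) * ∑' k, s k := by
    rw [← hsub, hshift, h0, zero_add, hr]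
  linear_combination hfin

lemma gauss_iter {q v u : ℂ} (hq : ‖q‖ < 1) (hu : ‖u‖ < 1)
    {C : ℝ} (hC0 : 0 < C) (hC : ∀ k, C ≤ ‖qPoch q q k‖) (n : ℕ) :
    (∑' k : ℕ, qPoch q v k * u ^ k / qPoch q q k) * qPoch q u n
      = (∑' k : ℕ, qPoch q v k * (q ^ n * u) ^ k / qPoch q q k) * qPoch q (u * v) n := by
  induction n with
  | zero => simp [qPoch]
  | succ n ih =>
    have hqnu : ‖q ^ n * u‖ < 1 := norm_pow_mul_lt hq hu n
    have fe := gauss_fe (v := v) hq hqnu hC0 hC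
    have harg : q * (q ^ n * u) = q ^ (n + 1) * u := by ring
    rw [harg] at fe
    rw [qPoch_succ, qPoch_succ]
    linear_combination (1 - u * q ^ n) * ih + qPoch q (u * v) n * fe

lemma gauss_lim {q v u : ℂ} (hq : ‖q‖ < 1) (hu : ‖u‖ < 1)
    {C : ℝ} (hC0 : 0 < C) (hC : ∀ k, C ≤ ‖qPoch q q k‖) :
    Tendsto (fun n : ℕ => ∑' k : ℕ, qPoch q v k * (q ^ n * u) ^ k / qPoch q q k)
      atTop (nhds 1) := by
  set D := Real.exp (‖v‖ * (1 - ‖q‖)⁻¹) with hD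
  have hDC : 0 ≤ D / C := div_nonneg (Real.exp_pos _).le hC0.le
  have hbound : ∀ w : ℂ, ‖w‖ ≤ 1 / 2 →
      ‖(∑' k : ℕ, qPoch q v k * w ^ k / qPoch q q k) - 1‖ ≤ D / C * 2 * ‖w‖ := by
    intro w hw
    have hw1 : ‖w‖ < 1 := lt_of_le_of_lt hw (by norm_num)
    set t : ℕ → ℂ := fun k => qPoch q v k * w ^ k / qPoch q q k with hts
    have St : Summable t := summable_gauss hq v hw1 hC0 hC
    have h0 : ∑' k, t k = t 0 + ∑' k, t (k + 1) := Summable.tsum_eq_zero_add St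
    have ht0 : t 0 = 1 := by simp [hts, qPoch]
    have hterm : ∀ k : ℕ, ‖t (k + 1)‖ ≤ D / C * (‖w‖ * ‖w‖ ^ k) := by
      intro k
      simp only [hts]
      rw [norm_div, norm_mul, norm_pow]
      have h1 := qPoch_norm_le hq v (k + 1)
      have h2 := hC (k + 1)
      calc ‖qPoch q v (k + 1)‖ * ‖w‖ ^ (k + 1) / ‖qPoch q q (k + 1)‖
          ≤ D * ‖w‖ ^ (k + 1) / C := by gcongr
        _ = D / C * (‖w‖ * ‖w‖ ^ k) := by rw [pow_succ]; ring
    have hsum2 : Summable fun k : ℕ => D / C * (‖w‖ * ‖w‖ ^ k) :=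
      ((summable_geometric_of_lt_one (norm_nonneg w) hw1).mul_left ‖w‖).mul_left _
    have h1 : ‖∑' k, t (k + 1)‖ ≤ ∑' k : ℕ, D / C * (‖w‖ * ‖w‖ ^ k) :=
      tsum_of_norm_bounded hsum2.hasSum hterm
    have h2 : ∑' k : ℕ, D / C * (‖w‖ * ‖w‖ ^ k) = D / C * ‖w‖ * (1 - ‖w‖)⁻¹ := by
      rw [tsum_mul_left, tsum_mul_left, tsum_geometric_of_lt_one (norm_nonneg w) hw1]
      ring
    have h3 : (1 - ‖w‖)⁻¹ ≤ 2 := by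
      have hhalf : (1 : ℝ) / 2 ≤ 1 - ‖w‖ := by linarith
      calc (1 - ‖w‖)⁻¹ ≤ ((1 : ℝ) / 2)⁻¹ := by
            apply inv_anti₀ (by norm_num) hhalf
        _ = 2 := by norm_num
    have heq : (∑' k, t k) - 1 = ∑' k, t (k + 1) := by rw [h0, ht0]; ring
    calc ‖(∑' k, t k) - 1‖ = ‖∑' k, t (k + 1)‖ := by rw [heq]
      _ ≤ D / C * ‖w‖ * (1 - ‖w‖)⁻¹ := h1.trans (le_of_eq h2)
      _ ≤ D / C * ‖w‖ * 2 :=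
          mul_le_mul_of_nonneg_left h3 (mul_nonneg hDC (norm_nonneg w))
      _ = D / C * 2 * ‖w‖ := by ring
  have htend0 : Tendsto (fun n : ℕ => q ^ n * u) atTop (nhds 0) := by
    simpa using (tendsto_pow_atTop_nhds_zero_of_norm_lt_one hq).mul_const u
  have hnorm : Tendsto (fun n : ℕ => ‖q ^ n * u‖) atTop (nhds 0) := by
    simpa using htend0.norm
  have hev : ∀ᶠ n in atTop, ‖q ^ n * u‖ ≤ 1 / 2 :=
    hnorm.eventually_le_const (by norm_num)
  have hg : Tendsto (fun n : ℕ => D / C * 2 * ‖q ^ n * u‖) atTop (nhds 0) := by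
    simpa using hnorm.const_mul (D / C * 2)
  have hsq : Tendsto
      (fun n : ℕ => (∑' k : ℕ, qPoch q v k * (q ^ n * u) ^ k / qPoch q q k) - 1)
      atTop (nhds 0) := by
    apply squeeze_zero_norm' _ hg
    filter_upwards [hev] with n hn
    exact hbound _ hn
  have := hsq.add_const 1
  simpa using this

lemma gauss_main {q v u : ℂ} (hq : ‖q‖ < 1) (hu : ‖u‖ < 1) (hv : ‖v‖ < 1) :
    (∑' k : ℕ, qPoch q v k * u ^ k / qPoch q q k) * qPochInf q u
      = qPochInf q (u * v) := by
  obtain ⟨C, hC0, hC⟩ := exists_lb hq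
  have huv : ‖u * v‖ < 1 := by
    rw [norm_mul]; nlinarith [norm_nonneg u, norm_nonneg v]
  have h1 : Tendsto
      (fun n => (∑' k : ℕ, qPoch q v k * u ^ k / qPoch q q k) * qPoch q u n)
      atTop (nhds ((∑' k : ℕ, qPoch q v k * u ^ k / qPoch q q k) * qPochInf q u)) :=
    (tendsto_qPoch hq hu).const_mul _
  have h2 : Tendsto
      (fun n => (∑' k : ℕ, qPoch q v k * (q ^ n * u) ^ k / qPoch q q k) *
        qPoch q (u * v) n)
      atTop (nhds (1 * qPochInf q (u * v))) :=
    (gauss_lim hq hu hC0 hC).mul (tendsto_qPoch hq huv)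
  have heq : (fun n => (∑' k : ℕ, qPoch q v k * u ^ k / qPoch q q k) * qPoch q u n)
      = fun n => (∑' k : ℕ, qPoch q v k * (q ^ n * u) ^ k / qPoch q q k) *
        qPoch q (u * v) n :=
    funext fun n => gauss_iter hq hu hC0 hC n
  rw [heq] at h1
  have := tendsto_nhds_unique h1 h2
  rwa [one_mul] at this

lemma euler_mul {q u : ℂ} (hq : ‖q‖ < 1) (hu : ‖u‖ < 1) :
    (∑' k : ℕ, u ^ k / qPoch q q k) * qPochInf q u = 1 := by
  have h := gauss_main (v := (0 : ℂ)) hq hu (by simp)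
  simp only [qPoch_zero_left, one_mul, mul_zero] at h
  have h0 : qPochInf q 0 = 1 := by
    unfold qPochInf
    simp
  rwa [h0] at h

lemma euler_tsum {q u : ℂ} (hq : ‖q‖ < 1) (hu : ‖u‖ < 1) :
    ∑' k : ℕ, u ^ k / qPoch q q k = (qPochInf q u)⁻¹ := by
  have h := euler_mul hq hu
  have hne := qPochInf_ne hq hu
  field_simp
  linear_combination h

end QP


set_option maxHeartbeats 2000000 in
/-- equation (B.5), the commuting-variable pentagon identity:
for `|q|, |u|, |v| < 1`, the family `q^{kl} u^k v^l / ((q;q)_k (q;q)_l)` is summable and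
`Σ_{k,l≥0} q^{kl} u^k v^l/((q;q)_k (q;q)_l) = (uv;q)_∞ / ((u;q)_∞ (v;q)_∞)`. -/
theorem statement5 (q u v : ℂ)
    (hq : ‖q‖ < 1) (hu : ‖u‖ < 1) (hv : ‖v‖ < 1) :
    Summable (fun p : ℕ × ℕ =>
      q ^ (p.1 * p.2) * u ^ p.1 * v ^ p.2 / (qPoch q q p.1 * qPoch q q p.2)) ∧
    (∑' p : ℕ × ℕ, q ^ (p.1 * p.2) * u ^ p.1 * v ^ p.2 / (qPoch q q p.1 * qPoch q q p.2))
      = qPochInf q (u * v) / (qPochInf q u * qPochInf q v) := by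
  obtain ⟨C, hC0, hC⟩ := QP.exists_lb hq
  set F : ℕ × ℕ → ℂ := fun p =>
    q ^ (p.1 * p.2) * u ^ p.1 * v ^ p.2 / (qPoch q q p.1 * qPoch q q p.2) with hF
  have hbnd : ∀ p : ℕ × ℕ, ‖F p‖ ≤ (C⁻¹ * ‖u‖ ^ p.1) * (C⁻¹ * ‖v‖ ^ p.2) := by
    rintro ⟨k, l⟩
    simp only [hF]
    rw [norm_div, norm_mul, norm_mul, norm_mul, norm_pow, norm_pow, norm_pow]
    have hq1 : ‖q‖ ^ (k * l) ≤ 1 := pow_le_one₀ (norm_nonneg q) hq.le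
    have h1 := hC k; have h2 := hC l
    have hCne : C ≠ 0 := hC0.ne'
    calc ‖q‖ ^ (k * l) * ‖u‖ ^ k * ‖v‖ ^ l / (‖qPoch q q k‖ * ‖qPoch q q l‖)
        ≤ 1 * ‖u‖ ^ k * ‖v‖ ^ l / (C * C) := by
          apply div_le_div₀ (by positivity)
            (mul_le_mul_of_nonneg_right
              (mul_le_mul_of_nonneg_right hq1 (pow_nonneg (norm_nonneg u) k))
              (pow_nonneg (norm_nonneg v) l))
            (mul_pos hC0 hC0)
            (mul_le_mul h1 h2 hC0.le (norm_nonneg _))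
      _ = (C⁻¹ * ‖u‖ ^ k) * (C⁻¹ * ‖v‖ ^ l) := by
          field_simp
  have hsumR : Summable (fun p : ℕ × ℕ => (C⁻¹ * ‖u‖ ^ p.1) * (C⁻¹ * ‖v‖ ^ p.2)) :=
    Summable.mul_of_nonneg
      ((summable_geometric_of_lt_one (norm_nonneg u) hu).mul_left _)
      ((summable_geometric_of_lt_one (norm_nonneg v) hv).mul_left _)
      (fun k => by positivity) (fun l => by positivity)
  have hF_sum : Summable F := Summable.of_norm_bounded hsumR hbnd
  refine ⟨hF_sum, ?_⟩
  have hrow_eq : ∀ k : ℕ, (fun l : ℕ => F (k, l)) =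
      fun l : ℕ => (u ^ k / qPoch q q k) * ((q ^ k * v) ^ l / qPoch q q l) := by
    intro k
    funext l
    simp only [hF]
    have h1 : qPoch q q k ≠ 0 := QP.qPoch_ne hq hq k
    have h2 : qPoch q q l ≠ 0 := QP.qPoch_ne hq hq l
    field_simp
    rw [mul_pow, ← pow_mul]
    ring
  have hrow : ∀ k : ℕ, Summable fun l : ℕ => F (k, l) := by
    intro k
    rw [hrow_eq k]
    apply Summable.mul_left
    have hs := QP.summable_gauss hq (0 : ℂ) (QP.norm_pow_mul_lt hq hv k) hC0 hC
    simpa [QP.qPoch_zero_left] using hs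
  have hPu := QP.qPochInf_ne hq hu
  have hPv := QP.qPochInf_ne hq hv
  have htsum : (∑' p : ℕ × ℕ, F p) = ∑' k : ℕ, ∑' l : ℕ, F (k, l) :=
    Summable.tsum_prod' hF_sum hrow
  have hinner : ∀ k : ℕ, (∑' l : ℕ, F (k, l))
      = (qPochInf q v)⁻¹ * (qPoch q v k * u ^ k / qPoch q q k) := by
    intro k
    have hqkv : ‖q ^ k * v‖ < 1 := QP.norm_pow_mul_lt hq hv k
    have h1 := QP.qPochInf_ne hq hqkv
    have ht := QP.qPochInf_tail hq hv k
    have hinv : (qPochInf q (q ^ k * v))⁻¹ = qPoch q v k * (qPochInf q v)⁻¹ := by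
      field_simp
      linear_combination ht
    rw [hrow_eq k, tsum_mul_left, QP.euler_tsum hq hqkv, hinv]
    ring
  have hgauss : (∑' k : ℕ, qPoch q v k * u ^ k / qPoch q q k)
      = qPochInf q (u * v) * (qPochInf q u)⁻¹ := by
    have hg := QP.gauss_main hq hu hv
    field_simp
    linear_combination hg
  rw [htsum]
  calc ∑' k : ℕ, ∑' l : ℕ, F (k, l)
      = ∑' k : ℕ, (qPochInf q v)⁻¹ * (qPoch q v k * u ^ k / qPoch q q k) :=
        tsum_congr hinner
    _ = (qPochInf q v)⁻¹ * ∑' k : ℕ, qPoch q v k * u ^ k / qPoch q q k :=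
        tsum_mul_left
    _ = (qPochInf q v)⁻¹ * (qPochInf q (u * v) * (qPochInf q u)⁻¹) := by rw [hgauss]
    _ = qPochInf q (u * v) / (qPochInf q u * qPochInf q v) := by
        rw [div_eq_mul_inv, mul_inv]
        ring
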